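/- Let A be a small preadditive category, P a right A-module, and consider the assertions: (1) P is finitely generated projective; (2) P is isomorphic to εA for some idempotent endomorphism ε ∈ A(x,x), x ∈ Ob(A); (3) P is isomorphic to H_x for some x ∈ Ob(A). Then (3) ⇒ (2) ⇒ (1) always hold; (1) ⇒ (2) holds if A is additive; and (2) ⇒ (3) holds if A is idempotent complete. In particular all three assertions are equivalent when A is Cauchy complete. -/

import Mathlib

open CategoryTheory CategoryTheory.Limits Opposite
noncomputable section
universe u
variable (A : Type u) [SmallCategory A] [Preadditive A]

abbrev PMod := Aᵒᵖ ⥤ AddCommGrpCat.{u}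

def Hrep (b : A) : PMod A where
  obj a := AddCommGrpCat.of (unop a ⟶ b)
  map f := AddCommGrpCat.ofHom (AddMonoidHom.mk' (fun g => f.unop ≫ g)
    (fun g h => Preadditive.comp_add _ _ _ _ _ _))
  map_id a := by ext g; simp
  map_comp f g := by
    ext h
    show (f ≫ g).unop ≫ h = g.unop ≫ f.unop ≫ h
    simp

def toH {a b : A} (γ : a ⟶ b) : ((Hrep A b).obj (op a)) := γ

def Hmap {b b' : A} (r : b ⟶ b') : Hrep A b ⟶ Hrep A b' where
  app a := AddCommGrpCat.ofHom (AddMonoidHom.mk' (fun g => g ≫ r)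
    (fun g h => Preadditive.add_comp _ _ _ _ _ _))
  naturality a a' f := by
    ext g
    show (f.unop ≫ g) ≫ r = f.unop ≫ g ≫ r
    exact Category.assoc _ _ _

def inSub {M : PMod A} (R : Subobject M) {a : A} (x : M.obj (op a)) : Prop :=
  ∃ y, R.arrow.app (op a) y = x


/-- `M` is a finitely generated module: an epimorphic image of a finite coproduct of
representables. -/
def IsFinitelyGenerated (M : PMod A) : Prop :=
  ∃ (n : ℕ) (g : Fin n → A) (p : (∐ fun i => Hrep A (g i)) ⟶ M), Epi p

/-- `P` is a projective module: `Hom_A(P, -)` preserves epimorphisms of modules. -/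
def IsProjectiveMod (P : PMod A) : Prop :=
  ∀ ⦃X Y : PMod A⦄, X.Additive → Y.Additive → ∀ (e : X ⟶ Y), Epi e →
    ∀ f : P ⟶ Y, ∃ l : P ⟶ X, l ≫ e = f

lemma Hmap_id (x : A) : Hmap A (𝟙 x) = 𝟙 (Hrep A x) := by
  ext a g
  show g ≫ 𝟙 x = g
  exact Category.comp_id _

lemma Hmap_comp {x y z : A} (r : x ⟶ y) (s : y ⟶ z) :
    Hmap A (r ≫ s) = Hmap A r ≫ Hmap A s := by
  ext a g
  show g ≫ r ≫ s = (g ≫ r) ≫ s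
  exact (Category.assoc _ _ _).symm

lemma Hmap_zero (x y : A) : Hmap A (0 : x ⟶ y) = 0 := by
  ext a g
  show g ≫ (0 : x ⟶ y) = 0
  exact Limits.comp_zero

lemma yoneda_elem {x : A} {M : PMod A} (η : Hrep A x ⟶ M) (a : A) (g : a ⟶ x) :
    η.app (op a) (toH A g) = M.map g.op (η.app (op x) (toH A (𝟙 x))) := by
  have h := ConcreteCategory.congr_hom (η.naturality g.op) (toH A (𝟙 x))
  have h2 : (Hrep A x).map g.op (toH A (𝟙 x)) = toH A g := by
    show g ≫ 𝟙 x = g; simp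
  calc η.app (op a) (toH A g) = η.app (op a) ((Hrep A x).map g.op (toH A (𝟙 x))) := by rw [h2]
    _ = M.map g.op (η.app (op x) (toH A (𝟙 x))) := h

lemma hmap_of_endo {x : A} (η : Hrep A x ⟶ Hrep A x) :
    η = Hmap A (η.app (op x) (toH A (𝟙 x))) := by
  ext a g
  exact (yoneda_elem A η (unop a) g).trans rfl

lemma Hmap_inj {x y : A} {α β : x ⟶ y} (h : Hmap A α = Hmap A β) : α = β := by
  have h1 := ConcreteCategory.congr_hom (congrArg (fun η => NatTrans.app η (op x)) h) (toH A (𝟙 x))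
  have h2 : 𝟙 x ≫ α = 𝟙 x ≫ β := h1
  simpa using h2

lemma hrep_additive (x : A) : (Hrep A x).Additive := by
  constructor
  intro a a' f g
  ext h
  show (f + g).unop ≫ h = f.unop ≫ h + g.unop ≫ h
  exact Preadditive.add_comp _ _ _ _ _ _

lemma hrep_proj (x : A) {X Y : PMod A} (hX : X.Additive) (e : X ⟶ Y) (he : Epi e)
    (f : Hrep A x ⟶ Y) : ∃ l : Hrep A x ⟶ X, l ≫ e = f := by
  haveI := he
  haveI : Epi (e.app (op x)) := inferInstance
  obtain ⟨v, hv⟩ := (AddCommGrpCat.epi_iff_surjective _).1 this (f.app (op x) (toH A (𝟙 x)))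
  refine ⟨{ app := fun a => AddCommGrpCat.ofHom (AddMonoidHom.mk'
      (fun g => X.map (Quiver.Hom.op (g : unop a ⟶ x)) v) ?_), naturality := ?_ }, ?_⟩
  · intro g h
    show X.map (g + h : unop a ⟶ x).op v = X.map g.op v + X.map h.op v
    rw [show (g + h : unop a ⟶ x).op = g.op + h.op from rfl, hX.map_add]
    rfl
  · intro a a' fm
    ext g
    show X.map ((g : unop a ⟶ x).op ≫ fm) v = X.map fm (X.map (g : unop a ⟶ x).op v)
    rw [X.map_comp]
    rfl
  · ext a g
    show e.app a (X.map (g : unop a ⟶ x).op v) = f.app a g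
    have h1 := ConcreteCategory.congr_hom (e.naturality (g : unop a ⟶ x).op) v
    have h2 : f.app a (g : (Hrep A x).obj a)
        = Y.map (g : unop a ⟶ x).op (f.app (op x) (toH A (𝟙 x))) :=
      yoneda_elem A f (unop a) g
    calc e.app a (X.map (g : unop a ⟶ x).op v)
        = Y.map (g : unop a ⟶ x).op (e.app (op x) v) := h1
      _ = Y.map (g : unop a ⟶ x).op (f.app (op x) (toH A (𝟙 x))) := by rw [hv]
      _ = f.app a g := h2.symm

theorem statement11 (P : PMod A) (hP : P.Additive) :
    -- (3) ⇒ (2)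
    ((∃ x : A, Nonempty (P ≅ Hrep A x)) →
      ∃ (x : A) (ε : x ⟶ x), ε ≫ ε = ε ∧ Nonempty (P ≅ image (Hmap A ε))) ∧
    -- (2) ⇒ (1)
    ((∃ (x : A) (ε : x ⟶ x), ε ≫ ε = ε ∧ Nonempty (P ≅ image (Hmap A ε))) →
      IsFinitelyGenerated A P ∧ IsProjectiveMod A P) ∧
    -- (1) ⇒ (2) when `A` is additive
    (HasFiniteBiproducts A →
      IsFinitelyGenerated A P ∧ IsProjectiveMod A P →
      ∃ (x : A) (ε : x ⟶ x), ε ≫ ε = ε ∧ Nonempty (P ≅ image (Hmap A ε))) ∧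
    -- (2) ⇒ (3) when `A` is idempotent complete
    (IsIdempotentComplete A →
      (∃ (x : A) (ε : x ⟶ x), ε ≫ ε = ε ∧ Nonempty (P ≅ image (Hmap A ε))) →
      ∃ x : A, Nonempty (P ≅ Hrep A x)) := by
  refine ⟨?_, ?_, ?_, ?_⟩
  · -- (3) ⇒ (2)
    rintro ⟨x, ⟨iso⟩⟩
    exact ⟨x, 𝟙 x, by simp,
      ⟨iso ≪≫ image.isoStrongEpiMono (f := Hmap A (𝟙 x)) (𝟙 (Hrep A x)) (𝟙 (Hrep A x))
        (by rw [Hmap_id]; simp)⟩⟩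
  · -- (2) ⇒ (1)
    rintro ⟨x, ε, hε, ⟨iso⟩⟩
    set m := image.ι (Hmap A ε) with hm
    set e' := factorThruImage (Hmap A ε) with he'
    have hfac : e' ≫ m = Hmap A ε := image.fac _
    have hme : m ≫ e' = 𝟙 (image (Hmap A ε)) := by
      have h3 : e' ≫ (m ≫ e') ≫ m = e' ≫ 𝟙 (image (Hmap A ε)) ≫ m := by
        calc e' ≫ (m ≫ e') ≫ m = (e' ≫ m) ≫ (e' ≫ m) := by simp [Category.assoc]
          _ = Hmap A ε ≫ Hmap A ε := by rw [hfac]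
          _ = Hmap A (ε ≫ ε) := (Hmap_comp A ε ε).symm
          _ = Hmap A ε := by rw [hε]
          _ = e' ≫ 𝟙 (image (Hmap A ε)) ≫ m := by rw [Category.id_comp, hfac]
      exact (cancel_mono m).1 ((cancel_epi e').1 h3)
    set σ : P ⟶ Hrep A x := iso.hom ≫ m with hσ
    set π : Hrep A x ⟶ P := e' ≫ iso.inv with hπ
    have hσπ : σ ≫ π = 𝟙 P := by
      calc σ ≫ π = iso.hom ≫ (m ≫ e') ≫ iso.inv := by simp [hσ, hπ, Category.assoc]
        _ = 𝟙 P := by rw [hme, Category.id_comp, iso.hom_inv_id]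
    haveI : IsSplitEpi π := IsSplitEpi.mk' ⟨σ, hσπ⟩
    constructor
    · refine ⟨1, fun _ => x, Sigma.desc fun _ => π, ?_⟩
      haveI : Epi (Sigma.ι (fun _ : Fin 1 => Hrep A x) 0 ≫ Sigma.desc fun _ => π) := by
        rw [Sigma.ι_desc]; infer_instance
      exact epi_of_epi (Sigma.ι _ 0) _
    · intro X Y hX hY e he f
      obtain ⟨L, hL⟩ := hrep_proj A x hX e he (π ≫ f)
      exact ⟨σ ≫ L, by rw [Category.assoc, hL, ← Category.assoc, hσπ, Category.id_comp]⟩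
  · -- (1) ⇒ (2)
    rintro hbp ⟨⟨n, g, p, hp⟩, hproj⟩
    haveI := hbp
    set x := ⨁ g with hx
    set q : Hrep A x ⟶ P :=
      ∑ i : Fin n, Hmap A (biproduct.π g i) ≫ (Sigma.ι (fun i => Hrep A (g i)) i ≫ p) with hq
    have hfac : Sigma.desc (fun i => Hmap A (biproduct.ι g i)) ≫ q = p := by
      apply Sigma.hom_ext
      intro i
      rw [← Category.assoc, Sigma.ι_desc, hq, Preadditive.comp_sum]
      rw [Finset.sum_eq_single i]
      · rw [← Category.assoc, ← Hmap_comp, biproduct.ι_π_self, Hmap_id, Category.id_comp]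
      · intro j _ hj
        rw [← Category.assoc, ← Hmap_comp, biproduct.ι_π_ne g (Ne.symm hj), Hmap_zero,
          Limits.zero_comp]
      · intro h; exact absurd (Finset.mem_univ i) h
    haveI : Epi (Sigma.desc (fun i => Hmap A (biproduct.ι g i)) ≫ q) := by rw [hfac]; exact hp
    haveI hqe : Epi q := epi_of_epi (Sigma.desc fun i => Hmap A (biproduct.ι g i)) q
    obtain ⟨l, hl⟩ := hproj (hrep_additive A x) hP q hqe (𝟙 P)
    set ε : x ⟶ x := (q ≫ l).app (op x) (toH A (𝟙 x)) with hεdef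
    have h1 : q ≫ l = Hmap A ε := hmap_of_endo A (q ≫ l)
    have hεidem : ε ≫ ε = ε := by
      apply Hmap_inj A
      rw [Hmap_comp, ← h1]
      calc (q ≫ l) ≫ q ≫ l = q ≫ (l ≫ q) ≫ l := by simp [Category.assoc]
        _ = q ≫ l := by rw [hl, Category.id_comp]
    haveI : IsSplitMono l := IsSplitMono.mk' ⟨q, hl⟩
    haveI : StrongEpi q := strongEpi_of_epi q
    exact ⟨x, ε, hεidem, ⟨image.isoStrongEpiMono (f := Hmap A ε) q l h1⟩⟩
  · -- (2) ⇒ (3)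
    rintro hic ⟨x, ε, hε, ⟨iso⟩⟩
    obtain ⟨y, i, e, hie, hei⟩ := hic.idempotents_split x ε hε
    haveI : IsSplitEpi (Hmap A e) :=
      IsSplitEpi.mk' ⟨Hmap A i, by rw [← Hmap_comp, hie, Hmap_id]⟩
    haveI : IsSplitMono (Hmap A i) :=
      IsSplitMono.mk' ⟨Hmap A e, by rw [← Hmap_comp, hie, Hmap_id]⟩
    haveI : StrongEpi (Hmap A e) := strongEpi_of_epi _
    have comm : Hmap A e ≫ Hmap A i = Hmap A ε := by rw [← Hmap_comp, hei]
    exact ⟨y, ⟨iso ≪≫ (image.isoStrongEpiMono (f := Hmap A ε) (Hmap A e) (Hmap A i) comm).symm⟩⟩
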